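/- For φ₂(t) = t/(1+t) and ς ∈ (0,∞), the function h_ς^{(2)}(t) := inf_{τ>0}{ φ₂(1/τ)·t² + (ς²/4)·τ } equals t² for 0 ≤ t ≤ ς/2 and ς·t − ς²/4 for t ≥ ς/2; in particular h_ς^{(2)} is convex, so it coincides with its convex envelope. -/

import Mathlib

open Set Filter Topology

/-- `hS φ ς t = inf_{τ>0} { φ(1/τ)·t² + (ς²/4)·τ }`. -/
noncomputable def hS (φ : ℝ → ℝ) (ς t : ℝ) : ℝ :=
  sInf {y : ℝ | ∃ τ : ℝ, 0 < τ ∧ y = φ (1/τ) * t^2 + ς^2/4 * τ}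

/-- The convex lower envelope of `f` on `[0,∞)`. -/
noncomputable def convEnv (f : ℝ → ℝ) (t : ℝ) : ℝ :=
  sSup {y : ℝ | ∃ g : ℝ → ℝ, ConvexOn ℝ (Ici 0) g ∧ (∀ s ∈ Ici (0:ℝ), g s ≤ f s) ∧ y = g t}

/-- The explicit piecewise formula. -/
noncomputable def Gfun (ς : ℝ) : ℝ → ℝ := fun t => if t ≤ ς/2 then t^2 else ς*t - ς^2/4

lemma Gfun_tangent (ς z w : ℝ) :
    Gfun ς z + (if z ≤ ς/2 then 2*z else ς) * (w - z) ≤ Gfun ς w := by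
  unfold Gfun
  split_ifs with h1 h2 h2 <;> try push_neg at *
  · nlinarith [sq_nonneg (w - z)]
  · nlinarith [mul_nonneg (by linarith : (0:ℝ) ≤ ς/2 - z) (by linarith : (0:ℝ) ≤ 2*w - z - ς/2)]
  · nlinarith [sq_nonneg (w - ς/2)]
  · nlinarith

lemma Gfun_convexOn (ς : ℝ) : ConvexOn ℝ (Ici 0) (Gfun ς) := by
  refine ⟨convex_Ici 0, fun x _ y _ a b ha hb hab => ?_⟩
  simp only [smul_eq_mul]
  set z := a*x + b*y with hzdef
  set D := if z ≤ ς/2 then 2*z else ς with hD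
  have h1 := mul_le_mul_of_nonneg_left (Gfun_tangent ς z x) ha
  have h2 := mul_le_mul_of_nonneg_left (Gfun_tangent ς z y) hb
  have h3 : a*(x - z) + b*(y - z) = 0 := by
    rw [hzdef]; linear_combination (-(a*x+b*y))*hab
  have h4 : D * (a*(x - z)) + D * (b*(y - z)) = 0 := by
    have : D * (a*(x - z) + b*(y - z)) = 0 := by rw [h3]; ring
    linarith [this]
  have h5 : a * Gfun ς z + b * Gfun ς z = Gfun ς z := by
    rw [← add_mul, hab, one_mul]
  rw [← hD] at h1 h2
  linarith [h1, h2, h4, h5]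

theorem stmt10 (ς : ℝ) (hς : 0 < ς) :
    (∀ t : ℝ, 0 ≤ t → t ≤ ς/2 → hS (fun s => s / (1 + s)) ς t = t^2) ∧
    (∀ t : ℝ, ς/2 ≤ t → hS (fun s => s / (1 + s)) ς t = ς*t - ς^2/4) ∧
    ConvexOn ℝ (Ici 0) (hS (fun s => s / (1 + s)) ς) ∧
    (∀ t ≥ (0:ℝ), convEnv (hS (fun s => s / (1 + s)) ς) t
      = hS (fun s => s / (1 + s)) ς t) := by
  have hval : ∀ t τ : ℝ, 0 < τ →
      (fun s : ℝ => s / (1 + s)) (1/τ) * t^2 + ς^2/4 * τ = t^2/(1+τ) + ς^2/4 * τ := by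
    intro t τ hτ
    have h1 : (0:ℝ) < 1 + τ := by linarith
    have h2 : (1/τ) / (1 + 1/τ) = 1/(1+τ) := by
      have h3 : 1 + 1/τ ≠ 0 := by positivity
      field_simp
      ring
    simp only
    rw [h2]
    ring
  have hmem : ∀ t τ : ℝ, 0 < τ →
      t^2/(1+τ) + ς^2/4 * τ ∈
        {y : ℝ | ∃ τ : ℝ, 0 < τ ∧ y = (fun s : ℝ => s / (1 + s)) (1/τ) * t^2 + ς^2/4 * τ} :=
    fun t τ hτ => ⟨τ, hτ, (hval t τ hτ).symm⟩
  -- Part 1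
  have part1 : ∀ t : ℝ, 0 ≤ t → t ≤ ς/2 → hS (fun s => s / (1 + s)) ς t = t^2 := by
    intro t ht htc
    have hlb : ∀ y ∈ {y : ℝ | ∃ τ : ℝ, 0 < τ ∧
        y = (fun s : ℝ => s / (1 + s)) (1/τ) * t^2 + ς^2/4 * τ}, t^2 ≤ y := by
      rintro y ⟨τ, hτ, rfl⟩
      rw [hval t τ hτ]
      have h1 : (0:ℝ) < 1 + τ := by linarith
      have key : t^2/(1+τ) + ς^2/4*τ - t^2 = τ*(ς^2/4*(1+τ) - t^2)/(1+τ) := by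
        field_simp
        ring
      have ht2 : t^2 ≤ ς^2/4 := by nlinarith
      nlinarith [div_nonneg (mul_nonneg hτ.le (by nlinarith : (0:ℝ) ≤ ς^2/4*(1+τ) - t^2)) h1.le]
    have hbdd : BddBelow {y : ℝ | ∃ τ : ℝ, 0 < τ ∧
        y = (fun s : ℝ => s / (1 + s)) (1/τ) * t^2 + ς^2/4 * τ} := ⟨t^2, hlb⟩
    refine le_antisymm ?_ (le_csInf ⟨_, hmem t 1 one_pos⟩ hlb)
    apply le_of_forall_pos_le_add
    intro ε hε
    have hτ : (0:ℝ) < 2*ε/ς^2 := by positivity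
    calc hS (fun s => s / (1 + s)) ς t ≤ t^2/(1+2*ε/ς^2) + ς^2/4 * (2*ε/ς^2) :=
          csInf_le hbdd (hmem t _ hτ)
      _ ≤ t^2 + ε := by
          have h1 : (0:ℝ) < 1 + 2*ε/ς^2 := by linarith
          have h2 : t^2/(1+2*ε/ς^2) ≤ t^2 := by
            rw [div_le_iff₀ h1]; nlinarith [sq_nonneg t]
          have h3 : ς^2/4 * (2*ε/ς^2) = ε/2 := by field_simp; ring
          linarith
  -- Part 2
  have part2 : ∀ t : ℝ, ς/2 ≤ t → hS (fun s => s / (1 + s)) ς t = ς*t - ς^2/4 := by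
    intro t htc
    have ht : 0 ≤ t := by linarith
    have hlb : ∀ y ∈ {y : ℝ | ∃ τ : ℝ, 0 < τ ∧
        y = (fun s : ℝ => s / (1 + s)) (1/τ) * t^2 + ς^2/4 * τ}, ς*t - ς^2/4 ≤ y := by
      rintro y ⟨τ, hτ, rfl⟩
      rw [hval t τ hτ]
      have h1 : (0:ℝ) < 1 + τ := by linarith
      have key : t^2/(1+τ) + ς^2/4*τ - (ς*t - ς^2/4) = (t - ς*(1+τ)/2)^2/(1+τ) := by
        field_simp
        ring
      nlinarith [div_nonneg (sq_nonneg (t - ς*(1+τ)/2)) h1.le]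
    have hbdd : BddBelow {y : ℝ | ∃ τ : ℝ, 0 < τ ∧
        y = (fun s : ℝ => s / (1 + s)) (1/τ) * t^2 + ς^2/4 * τ} := ⟨ς*t - ς^2/4, hlb⟩
    refine le_antisymm ?_ (le_csInf ⟨_, hmem t 1 one_pos⟩ hlb)
    apply le_of_forall_pos_le_add
    intro ε hε
    set τ := 2*t/ς - 1 + 4*ε/ς^2 with hτdef
    have hτ : 0 < τ := by
      have : (1:ℝ) ≤ 2*t/ς := by rw [le_div_iff₀ hς]; linarith
      have : (0:ℝ) < 4*ε/ς^2 := by positivity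
      rw [hτdef]; linarith
    have h1τ : 1 + τ = 2*t/ς + 4*ε/ς^2 := by rw [hτdef]; ring
    have h1pos : (0:ℝ) < 1 + τ := by linarith
    calc hS (fun s => s / (1 + s)) ς t ≤ t^2/(1+τ) + ς^2/4 * τ :=
          csInf_le hbdd (hmem t _ hτ)
      _ ≤ ς*t - ς^2/4 + ε := by
          have h2 : t^2/(1+τ) ≤ ς*t/2 := by
            rw [div_le_iff₀ h1pos, h1τ]
            have heq : ς*t/2 * (2*t/ς) = t^2 := by field_simp
            have hst : (0:ℝ) ≤ ς*t/2 := div_nonneg (mul_nonneg hς.le ht) (by norm_num)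
            nlinarith [heq, mul_nonneg hst (show (0:ℝ) ≤ 4*ε/ς^2 by positivity)]
          have h3 : ς^2/4 * τ = ς*t/2 - ς^2/4 + ε := by
            rw [hτdef]; field_simp; ring
          linarith
  -- agreement with Gfun on [0,∞)
  have hGeq : ∀ t ∈ Ici (0:ℝ), hS (fun s => s / (1 + s)) ς t = Gfun ς t := by
    intro t ht
    by_cases h : t ≤ ς/2
    · rw [part1 t ht h]; simp [Gfun, h]
    · rw [part2 t (le_of_not_ge h)]; simp [Gfun, h]
  have hconv : ConvexOn ℝ (Ici 0) (hS (fun s => s / (1 + s)) ς) := by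
    refine ⟨convex_Ici 0, fun x hx y hy a b ha hb hab => ?_⟩
    have hz : a • x + b • y ∈ Ici (0:ℝ) := (convex_Ici 0) hx hy ha hb hab
    rw [hGeq _ hx, hGeq _ hy, hGeq _ hz]
    exact (Gfun_convexOn ς).2 hx hy ha hb hab
  refine ⟨part1, part2, hconv, ?_⟩
  intro t ht
  apply le_antisymm
  · refine csSup_le ⟨hS (fun s => s / (1 + s)) ς t,
      hS (fun s => s / (1 + s)) ς, hconv, fun s _ => le_rfl, rfl⟩ ?_
    rintro y ⟨g, hg, hle, rfl⟩
    exact hle t ht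
  · refine le_csSup ⟨hS (fun s => s / (1 + s)) ς t, ?_⟩
      ⟨hS (fun s => s / (1 + s)) ς, hconv, fun s _ => le_rfl, rfl⟩
    rintro y ⟨g, hg, hle, rfl⟩
    exact hle t ht
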